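/- arXiv:1107.3265 — 8 statements merged into one kernel-verified Lean document; each statement's English description precedes it below -/
import Mathlib

section
/- Let η be a numerical submeasure on a ring Σ. For λ > 0 and E ∈ Σ define γ_E(x) = 1 − exp(−x/(λ·η(E))) for x > 0 (with the convention 0/0 = 0, so γ_E = ε_0 when η(E)=0). Then γ is a τ_M-submeasure, i.e., γ_∅ = ε_0, γ is antitone under inclusion, and γ_{E∪F}(x+y) ≥ min(γ_E(x), γ_F(y)) for all x,y > 0. -/
open Set
open scoped ENNReal Classical

noncomputable section

def eps0 (x : ℝ) : ℝ := if 0 < x then 1 else 0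

def IsDistrFn (F : ℝ → ℝ) : Prop :=
  Monotone F ∧ (∀ x, x ≤ 0 → F x = 0) ∧ (∀ x, F x ≤ 1)

def IsSetRing {Ω : Type*} (R : Set (Set Ω)) : Prop :=
  ∅ ∈ R ∧ (∀ E F : Set Ω, E ∈ R → F ∈ R → E ∪ F ∈ R) ∧
    (∀ E F : Set Ω, E ∈ R → F ∈ R → E \ F ∈ R)

def IsNumSubmeasure {Ω : Type*} (R : Set (Set Ω)) (η : Set Ω → ℝ≥0∞) : Prop :=
  η ∅ = 0 ∧ (∀ E F : Set Ω, E ∈ R → F ∈ R → E ⊆ F → η E ≤ η F) ∧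
    (∀ E F : Set Ω, E ∈ R → F ∈ R → η (E ∪ F) ≤ η E + η F)

/-- `γ` is a `τ_{L,A}`-submeasure on the ring `R`. -/
def IsTauSub {Ω : Type*} (R : Set (Set Ω)) (L : ℝ → ℝ → ℝ) (A : ℝ → ℝ → ℝ)
    (γ : Set Ω → ℝ → ℝ) : Prop :=
  (∀ E, E ∈ R → IsDistrFn (γ E)) ∧
  (∀ x, γ ∅ x = eps0 x) ∧
  (∀ E F : Set Ω, E ∈ R → F ∈ R → E ⊆ F → ∀ x, γ F x ≤ γ E x) ∧
  (∀ E F : Set Ω, E ∈ R → F ∈ R → ∀ x y : ℝ, 0 < x → 0 < y →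
    A (γ E x) (γ F y) ≤ γ (E ∪ F) (L x y))

def IsTnorm (T : ℝ → ℝ → ℝ) : Prop :=
  (∀ u v, T u v = T v u) ∧ (∀ u v w, T (T u v) w = T u (T v w)) ∧
  (∀ u u' v, u ∈ Icc (0:ℝ) 1 → u' ∈ Icc (0:ℝ) 1 → v ∈ Icc (0:ℝ) 1 → u ≤ u' →
    T u v ≤ T u' v) ∧
  (∀ u ∈ Icc (0:ℝ) 1, T u 1 = u) ∧
  (∀ u v, u ∈ Icc (0:ℝ) 1 → v ∈ Icc (0:ℝ) 1 → T u v ∈ Icc (0:ℝ) 1)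


private lemma mediant_min (x y p q : ℝ) (hp : 0 < p) (hq : 0 < q) :
    min (x / p) (y / q) ≤ (x + y) / (p + q) := by
  rcases le_total (x / p) (y / q) with h | h
  · rw [min_eq_left h]
    rw [div_le_div_iff₀ hp hq] at h
    rw [div_le_div_iff₀ hp (by positivity)]
    nlinarith
  · rw [min_eq_right h]
    rw [div_le_div_iff₀ hq hp] at h
    rw [div_le_div_iff₀ hq (by positivity)]
    nlinarith

private lemma div_mono_num (x y c : ℝ) (h : x ≤ y) (hc : 0 ≤ c) : x / c ≤ y / c := by
  rw [div_eq_mul_inv, div_eq_mul_inv]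
  exact mul_le_mul_of_nonneg_right h (inv_nonneg.2 hc)

private lemma gval_nonneg (lam t x : ℝ) (hx : 0 ≤ x) (ht : 0 ≤ t) (hlam : 0 < lam) :
    0 ≤ 1 - Real.exp (-(x / (lam * t))) := by
  have h1 : Real.exp (-(x / (lam * t))) ≤ 1 := by
    rw [Real.exp_le_one_iff]
    have : 0 ≤ x / (lam * t) := div_nonneg hx (by positivity)
    linarith
  linarith

private lemma gmono (u v : ℝ) (h : u ≤ v) : 1 - Real.exp (-u) ≤ 1 - Real.exp (-v) := by
  have := Real.exp_le_exp.mpr (neg_le_neg h); linarith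

private lemma gval_le_one (u : ℝ) : 1 - Real.exp u ≤ 1 := by
  have := Real.exp_pos u; linarith

/-- the exponential-type distribution functions built from a numerical
submeasure `η` form a `τ_M`-submeasure. -/
theorem stmt1 {Ω : Type*} (R : Set (Set Ω)) (hR : IsSetRing R)
    (η : Set Ω → ℝ≥0∞) (hη : IsNumSubmeasure R η) (lam : ℝ) (hlam : 0 < lam) :
    IsTauSub R (· + ·) (fun u v => min u v)
      (fun E x => if x ≤ 0 then 0 else if η E = 0 then 1
        else 1 - Real.exp (-(x / (lam * (η E).toReal)))) := by
  obtain ⟨hη0, hmono, hsub⟩ := hη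
  -- nonnegativity of value at positive argument
  have hpos : ∀ (E : Set Ω) (x : ℝ), 0 < x →
      0 ≤ if x ≤ 0 then (0:ℝ) else if η E = 0 then 1
        else 1 - Real.exp (-(x / (lam * (η E).toReal))) := by
    intro E x hx
    rw [if_neg (not_le.2 hx)]
    split_ifs with h
    · norm_num
    · exact gval_nonneg lam _ x hx.le ENNReal.toReal_nonneg hlam
  refine ⟨?_, ?_, ?_, ?_⟩
  · -- distribution function
    intro E _
    refine ⟨?_, ?_, ?_⟩
    · intro x y hxy
      dsimp only
      by_cases hy : y ≤ 0
      · rw [if_pos (hxy.trans hy), if_pos hy]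
      · rw [if_neg hy]
        by_cases hx : x ≤ 0
        · rw [if_pos hx]
          exact hpos E y (not_le.1 hy) |>.trans_eq (by rw [if_neg hy])
        · rw [if_neg hx]
          split_ifs with h
          · exact le_rfl
          · exact gmono _ _ (div_mono_num x y _ hxy (by positivity))
    · intro x hx
      simp [hx]
    · intro x
      dsimp only
      split_ifs with h1 h2
      · norm_num
      · exact le_rfl
      · exact gval_le_one _
  · -- empty set
    intro x
    simp only [hη0, if_true, eps0]
    split_ifs with h1 h2
    · linarith
    · rfl
    · rfl
    · linarith
  · -- antitone
    intro E F hE hF hEF x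
    dsimp only
    by_cases hx : x ≤ 0
    · simp [hx]
    rw [if_neg hx, if_neg hx]
    have hle : η E ≤ η F := hmono E F hE hF hEF
    by_cases hF0 : η F = 0
    · have hE0 : η E = 0 := le_antisymm (hF0 ▸ hle) zero_le
      rw [if_pos hF0, if_pos hE0]
    · rw [if_neg hF0]
      split_ifs with hE0
      · exact gval_le_one _
      · -- both nonzero
        by_cases hFtop : η F = ∞
        · -- γ F x = 1 - exp(-(x/0)) = 0
          rw [hFtop]
          simp only [ENNReal.toReal_top, mul_zero, div_zero, neg_zero, Real.exp_zero, sub_self]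
          exact gval_nonneg lam _ x (not_le.1 hx).le ENNReal.toReal_nonneg hlam
        · have hEtop : η E ≠ ∞ := fun h => hFtop (top_le_iff.1 (h ▸ hle))
          have htE : 0 < (η E).toReal := ENNReal.toReal_pos hE0 hEtop
          have htle : (η E).toReal ≤ (η F).toReal := ENNReal.toReal_le_toReal hEtop hFtop |>.2 hle
          have hx' : (0:ℝ) < x := not_le.1 hx
          exact gmono _ _ (div_le_div_of_nonneg_left hx'.le (by positivity)
            (mul_le_mul_of_nonneg_left htle hlam.le))
  · -- min inequality
    intro E F hE hF x y hx hy
    dsimp only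
    have hxy : ¬ (x + y ≤ 0) := by push_neg; linarith
    rw [if_neg (not_le.2 hx), if_neg (not_le.2 hy), if_neg hxy]
    by_cases hU0 : η (E ∪ F) = 0
    · rw [if_pos hU0]
      apply min_le_of_left_le
      split_ifs with h
      · exact le_rfl
      · exact gval_le_one _
    rw [if_neg hU0]
    have hUsub : η (E ∪ F) ≤ η E + η F := hsub E F hE hF
    by_cases hUtop : η (E ∪ F) = ∞
    · -- one of η E, η F is ∞, giving min ≤ 0 = target's lower bd... target = 0
      rw [hUtop]
      simp only [ENNReal.toReal_top, mul_zero, div_zero, neg_zero, Real.exp_zero, sub_self]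
      have : η E = ∞ ∨ η F = ∞ := by
        by_contra h
        push_neg at h
        exact (ne_top_of_le_ne_top (ENNReal.add_ne_top.2 ⟨h.1, h.2⟩) hUsub) hUtop
      rcases this with h | h
      · apply min_le_of_left_le
        have hE0 : η E ≠ 0 := by rw [h]; simp
        rw [if_neg hE0, h]
        simp
      · apply min_le_of_right_le
        have hF0 : η F ≠ 0 := by rw [h]; simp
        rw [if_neg hF0, h]
        simp
    · -- η (E ∪ F) finite nonzero
      set s := (η (E ∪ F)).toReal with hs
      have hspos : 0 < s := ENNReal.toReal_pos hU0 hUtop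
      have hExy : 0 ≤ 1 - Real.exp (-((x + y) / (lam * s))) :=
        gval_nonneg lam s (x + y) (by linarith) hspos.le hlam
      by_cases hEtop : η E = ∞
      · apply min_le_of_left_le
        have hE0 : η E ≠ 0 := by rw [hEtop]; simp
        rw [if_neg hE0, hEtop]
        simpa using hExy
      by_cases hFtop : η F = ∞
      · apply min_le_of_right_le
        have hF0 : η F ≠ 0 := by rw [hFtop]; simp
        rw [if_neg hF0, hFtop]
        simpa using hExy
      -- both finite now
      have hkey : ∀ u : ℝ, u ≤ (x + y) / (lam * s) →
          1 - Real.exp (-u) ≤ 1 - Real.exp (-((x + y) / (lam * s))) := by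
        intro u hu
        exact gmono _ _ hu
      by_cases hE0 : η E = 0
      · -- η(E∪F) ≤ η F, and x + y ≥ y
        apply min_le_of_right_le
        have hle : η (E ∪ F) ≤ η F := by
          calc η (E ∪ F) ≤ η E + η F := hUsub
          _ = η F := by rw [hE0, zero_add]
        have hF0 : η F ≠ 0 := fun h => hU0 (le_antisymm (h ▸ hle) zero_le)
        rw [if_neg hF0]
        have htle : s ≤ (η F).toReal := ENNReal.toReal_le_toReal hUtop hFtop |>.2 hle
        apply hkey
        calc y / (lam * (η F).toReal) ≤ y / (lam * s) :=
              div_le_div_of_nonneg_left hy.le (by positivity)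
                (mul_le_mul_of_nonneg_left htle hlam.le)
        _ ≤ (x + y) / (lam * s) := div_mono_num _ _ _ (by linarith) (by positivity)
      by_cases hF0 : η F = 0
      · apply min_le_of_left_le
        have hle : η (E ∪ F) ≤ η E := by
          calc η (E ∪ F) ≤ η E + η F := hUsub
          _ = η E := by rw [hF0, add_zero]
        rw [if_neg hE0]
        have htle : s ≤ (η E).toReal := ENNReal.toReal_le_toReal hUtop hEtop |>.2 hle
        apply hkey
        calc x / (lam * (η E).toReal) ≤ x / (lam * s) :=
              div_le_div_of_nonneg_left hx.le (by positivity)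
                (mul_le_mul_of_nonneg_left htle hlam.le)
        _ ≤ (x + y) / (lam * s) := div_mono_num _ _ _ (by linarith) (by positivity)
      · -- all finite nonzero
        rw [if_neg hE0, if_neg hF0]
        set p := (η E).toReal with hp
        set q := (η F).toReal with hq
        have hppos : 0 < p := ENNReal.toReal_pos hE0 hEtop
        have hqpos : 0 < q := ENNReal.toReal_pos hF0 hFtop
        have hsle : s ≤ p + q := by
          rw [hs, hp, hq, ← ENNReal.toReal_add hEtop hFtop]
          exact ENNReal.toReal_le_toReal hUtop (ENNReal.add_ne_top.2 ⟨hEtop, hFtop⟩) |>.2 hUsub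
        have hmin : min (x / (lam * p)) (y / (lam * q)) ≤ (x + y) / (lam * s) := by
          calc min (x / (lam * p)) (y / (lam * q)) ≤ (x + y) / (lam * p + lam * q) :=
              mediant_min x y (lam * p) (lam * q) (by positivity) (by positivity)
          _ = (x + y) / (lam * (p + q)) := by ring_nf
          _ ≤ (x + y) / (lam * s) :=
              div_le_div_of_nonneg_left (by linarith) (by positivity)
                (mul_le_mul_of_nonneg_left hsle hlam.le)
        rcases le_total (x / (lam * p)) (y / (lam * q)) with h | h
        · apply min_le_of_left_le
          exact hkey _ (le_trans (by rw [min_eq_left h] at hmin; exact hmin) le_rfl)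
        · apply min_le_of_right_le
          exact hkey _ (by rw [min_eq_right h] at hmin; exact hmin)
end
end

section
/- Let h : [0,1] → [0,1] be an increasing bijection such that the function x ↦ 1 − h(1−x) is subadditive on [0,1]. Then Ψ_h W ≤ W pointwise, where W(u,v) = max(u+v−1, 0); consequently every τ_{L₁,W}-submeasure is a τ_{L₂, Ψ_h W}-submeasure whenever L₁ ≤ L₂ pointwise. -/
open Set
open scoped ENNReal Classical

noncomputable section

/-- if `x ↦ 1 - h(1-x)` is subadditive for an increasing automorphism `h`
of `[0,1]` (with inverse `g`), then `Ψ_h W ≤ W` on `[0,1]²`, and consequently every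
`τ_{L₁,W}`-submeasure is a `τ_{L₂,Ψ_h W}`-submeasure whenever `L₁ ≤ L₂`. -/
theorem stmt11 (h g : ℝ → ℝ)
    (hmono : StrictMonoOn h (Icc 0 1)) (h0 : h 0 = 0) (h1 : h 1 = 1)
    (hmaps : MapsTo h (Icc 0 1) (Icc 0 1))
    (hgh : ∀ x ∈ Icc (0:ℝ) 1, g (h x) = x) (hhg : ∀ y ∈ Icc (0:ℝ) 1, h (g y) = y)
    (hgmono : MonotoneOn g (Icc 0 1)) (hgmaps : MapsTo g (Icc 0 1) (Icc 0 1))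
    (hsub : ∀ x y : ℝ, 0 ≤ x → 0 ≤ y → x + y ≤ 1 →
      1 - h (1 - (x + y)) ≤ (1 - h (1 - x)) + (1 - h (1 - y))) :
    (∀ u ∈ Icc (0:ℝ) 1, ∀ v ∈ Icc (0:ℝ) 1,
      g (max (h u + h v - 1) 0) ≤ max (u + v - 1) 0) ∧
    (∀ (Ω : Type) (R : Set (Set Ω)) (L₁ L₂ : ℝ → ℝ → ℝ), IsSetRing R →
      (∀ x y, L₁ x y ≤ L₂ x y) → ∀ γ : Set Ω → ℝ → ℝ,
        IsTauSub R L₁ (fun u v => max (u + v - 1) 0) γ →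
          IsTauSub R L₂ (fun u v => g (max (h u + h v - 1) 0)) γ) := by

  have hmonoOn : MonotoneOn h (Icc 0 1) := hmono.monotoneOn
  have key : ∀ u ∈ Icc (0:ℝ) 1, ∀ v ∈ Icc (0:ℝ) 1,
      g (max (h u + h v - 1) 0) ≤ max (u + v - 1) 0 := by
    intro u hu v hv
    have hhu := hmaps hu
    have hhv := hmaps hv
    have hkey : h u + h v - 1 ≤ h (max (u + v - 1) 0) := by
      rcases le_or_gt (u + v) 1 with hle | hgt
      · have hmax : max (u + v - 1) 0 = 0 := max_eq_right (by linarith)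
        rw [hmax, h0]
        have h1v : (1 - v) ∈ Icc (0:ℝ) 1 := ⟨by linarith [hv.2], by linarith [hv.1]⟩
        have hsub' := hsub v (1 - v) hv.1 (by linarith [hv.2]) (by linarith)
        have e1 : v + (1 - v) = 1 := by ring
        have e2 : (1:ℝ) - 1 = 0 := by ring
        have e3 : (1:ℝ) - (1 - v) = v := by ring
        rw [e1, e2, h0, e3] at hsub'
        have huv : h u ≤ h (1 - v) := hmonoOn hu h1v (by linarith)
        linarith
      · have hmax : max (u + v - 1) 0 = u + v - 1 := max_eq_left (by linarith)
        rw [hmax]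
        have hsub' := hsub (1 - u) (1 - v) (by linarith [hu.2]) (by linarith [hv.2])
          (by linarith [hu.1, hv.1])
        have e1 : (1:ℝ) - (1 - u + (1 - v)) = u + v - 1 := by ring
        have e2 : (1:ℝ) - (1 - u) = u := by ring
        have e3 : (1:ℝ) - (1 - v) = v := by ring
        rw [e1, e2, e3] at hsub'
        linarith
    rcases le_or_gt (h u + h v - 1) 0 with hle | hpos
    · have hm : max (h u + h v - 1) 0 = 0 := max_eq_right hle
      rw [hm]
      have hg0 : g 0 = 0 := by
        have := hgh 0 ⟨le_refl 0, zero_le_one⟩; rwa [h0] at this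
      rw [hg0]
      exact le_max_right _ _
    · have hwIn : max (u + v - 1) 0 ∈ Icc (0:ℝ) 1 :=
        ⟨le_max_right _ _, max_le (by linarith [hu.2, hv.2]) zero_le_one⟩
      have hmaxIn : max (h u + h v - 1) 0 ∈ Icc (0:ℝ) 1 :=
        ⟨le_max_right _ _, max_le (by linarith [hhu.2, hhv.2]) zero_le_one⟩
      have hle2 : max (h u + h v - 1) 0 ≤ h (max (u + v - 1) 0) :=
        max_le hkey (hmaps hwIn).1
      calc g (max (h u + h v - 1) 0) ≤ g (h (max (u + v - 1) 0)) :=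
            hgmono hmaxIn (hmaps hwIn) hle2
        _ = max (u + v - 1) 0 := hgh _ hwIn
  refine ⟨key, ?_⟩
  intro Ω R L₁ L₂ hR hL γ hτ
  obtain ⟨hdist, hempty, hmono', hA⟩ := hτ
  refine ⟨hdist, hempty, hmono', ?_⟩
  intro E F hE hF x y hx hy
  have hEF : E ∪ F ∈ R := hR.2.1 E F hE hF
  have hγE := hdist E hE
  have hγF := hdist F hF
  have hEx : γ E x ∈ Icc (0:ℝ) 1 := by
    constructor
    · have h1 : γ E 0 = 0 := hγE.2.1 0 le_rfl
      have h2 : γ E 0 ≤ γ E x := hγE.1 (le_of_lt hx)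
      linarith
    · exact hγE.2.2 x
  have hFy : γ F y ∈ Icc (0:ℝ) 1 := by
    constructor
    · have h1 : γ F 0 = 0 := hγF.2.1 0 le_rfl
      have h2 : γ F 0 ≤ γ F y := hγF.1 (le_of_lt hy)
      linarith
    · exact hγF.2.2 y
  show g (max (h (γ E x) + h (γ F y) - 1) 0) ≤ γ (E ∪ F) (L₂ x y)
  calc g (max (h (γ E x) + h (γ F y) - 1) 0) ≤ max (γ E x + γ F y - 1) 0 := key _ hEx _ hFy
    _ ≤ γ (E ∪ F) (L₁ x y) := hA E F hE hF x y hx hy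
    _ ≤ γ (E ∪ F) (L₂ x y) := (hdist _ hEF).1 (hL x y)
end
end

section
/- Let t : [0,1] → [0,∞] be continuous, strictly decreasing with t(1) = 0 (an additive generator of a continuous Archimedean t-norm T(x,y) = t^{(−1)}(t(x)+t(y)), where t^{(−1)}(x) = t⁻¹(min(t(0), x))). Let L be a binary operation on [0,∞] and w₁,…,w_n ≥ 0 with Σw_i = 1. If γ^{(1)},…,γ^{(n)} are τ_{L,T}-submeasures on Σ, then γ defined by γ_E(x) = t^{(−1)}(Σᵢ wᵢ t(γ^{(i)}_E(x))) is also a τ_{L,T}-submeasure on Σ. -/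
open Set
open scoped ENNReal Classical

noncomputable section

lemma distr_mem_aux {F : ℝ → ℝ} (h : IsDistrFn F) (x : ℝ) : F x ∈ Icc (0:ℝ) 1 := by
  obtain ⟨hm, h0, h1⟩ := h
  refine ⟨?_, h1 x⟩
  rcases le_or_gt x 0 with hx | hx
  · exact (h0 x hx).ge
  · calc (0:ℝ) = F 0 := (h0 0 le_rfl).symm
      _ ≤ F x := hm hx.le

lemma min_add_min_aux {a b c : ℝ≥0∞} : min c (a + b) ≤ min c a + min c b := by
  rcases le_total a c with h | h
  · rcases le_total b c with h' | h'
    · calc min c (a + b) ≤ a + b := min_le_right _ _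
        _ = min c a + min c b := by rw [min_eq_right h, min_eq_right h']
    · calc min c (a + b) ≤ c := min_le_left _ _
        _ = min c b := (min_eq_left h').symm
        _ ≤ min c a + min c b := le_add_self
  · calc min c (a + b) ≤ c := min_le_left _ _
      _ = min c a := (min_eq_left h).symm
      _ ≤ min c a + min c b := le_self_add

lemma sum_w_min_aux {n : ℕ} (w : Fin n → ℝ≥0∞) (hw : ∑ i, w i = 1) (c : ℝ≥0∞)
    (f : Fin n → ℝ≥0∞) : ∑ i, w i * min c (f i) ≤ min c (∑ i, w i * f i) := by
  refine le_min ?_ (Finset.sum_le_sum fun i _ => mul_le_mul_right (min_le_right _ _) _)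
  calc ∑ i, w i * min c (f i) ≤ ∑ i, w i * c :=
        Finset.sum_le_sum fun i _ => mul_le_mul_right (min_le_left _ _) _
    _ = c := by rw [← Finset.sum_mul, hw, one_mul]

/-- the weighted quasi-arithmetic mean generated by an additive generator
`t` (with pseudo-inverse `tinv`) of a continuous Archimedean t-norm
`T(u,v) = tinv (t u + t v)` preserves the class of `τ_{L,T}`-submeasures. -/
theorem stmt13 {Ω : Type*} (R : Set (Set Ω)) (hR : IsSetRing R)
    (t : ℝ → ℝ≥0∞) (tinv : ℝ≥0∞ → ℝ)
    (htc : ContinuousOn t (Icc 0 1)) (hta : StrictAntiOn t (Icc 0 1)) (ht1 : t 1 = 0)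
    (htinv_left : ∀ x ∈ Icc (0:ℝ) 1, tinv (t x) = x)
    (htinv_right : ∀ y, t (tinv y) = min (t 0) y)
    (htinv_mem : ∀ y, tinv y ∈ Icc (0:ℝ) 1) (htinv_anti : Antitone tinv)
    (L : ℝ → ℝ → ℝ) (n : ℕ) (w : Fin n → ℝ≥0∞) (hw : ∑ i, w i = 1)
    (γs : Fin n → Set Ω → ℝ → ℝ)
    (hγs : ∀ i, IsTauSub R L (fun u v => tinv (t u + t v)) (γs i)) :
    IsTauSub R L (fun u v => tinv (t u + t v))
      (fun E x => tinv (∑ i, w i * t (γs i E x))) := by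
  have hanti : AntitoneOn t (Icc 0 1) := hta.antitoneOn
  have hmem : ∀ i E, E ∈ R → ∀ x, γs i E x ∈ Icc (0:ℝ) 1 :=
    fun i E hE x => distr_mem_aux ((hγs i).1 E hE) x
  refine ⟨?_, ?_, ?_, ?_⟩
  · -- distribution function
    intro E hE
    refine ⟨?_, ?_, fun x => (htinv_mem _).2⟩
    · intro x y hxy
      apply htinv_anti
      refine Finset.sum_le_sum fun i _ => mul_le_mul_right ?_ _
      exact hanti (hmem i E hE x) (hmem i E hE y) (((hγs i).1 E hE).1 hxy)
    · intro x hx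
      have h0 : ∀ i : Fin n, γs i E x = 0 := fun i => ((hγs i).1 E hE).2.1 x hx
      simp only [h0]
      rw [← Finset.sum_mul, hw, one_mul]
      exact htinv_left 0 ⟨le_refl _, zero_le_one⟩
  · -- empty set
    intro x
    have h1 : ∀ i : Fin n, γs i ∅ x = eps0 x := fun i => (hγs i).2.1 x
    simp only [h1]
    rw [← Finset.sum_mul, hw, one_mul]
    unfold eps0
    split
    · rw [ht1]; rw [← ht1]; exact htinv_left 1 ⟨zero_le_one, le_refl _⟩
    · exact htinv_left 0 ⟨le_refl _, zero_le_one⟩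
  · -- antitone in the set
    intro E F hE hF hEF x
    apply htinv_anti
    refine Finset.sum_le_sum fun i _ => mul_le_mul_right ?_ _
    exact hanti (hmem i F hF x) (hmem i E hE x) ((hγs i).2.2.1 E F hE hF hEF x)
  · -- superadditivity
    intro E F hE hF x y hx hy
    dsimp only
    have hEF : E ∪ F ∈ R := hR.2.1 E F hE hF
    have key : ∀ i : Fin n, t (γs i (E ∪ F) (L x y)) ≤ min (t 0) (t (γs i E x) + t (γs i F y)) := by
      intro i
      have h := (hγs i).2.2.2 E F hE hF x y hx hy
      have := hanti (htinv_mem _) (hmem i _ hEF _) h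
      rwa [htinv_right] at this
    rw [htinv_right, htinv_right]
    apply htinv_anti
    calc ∑ i, w i * t (γs i (E ∪ F) (L x y))
        ≤ ∑ i, w i * min (t 0) (t (γs i E x) + t (γs i F y)) :=
          Finset.sum_le_sum fun i _ => mul_le_mul_right (key i) _
      _ ≤ ∑ i, (w i * min (t 0) (t (γs i E x)) + w i * min (t 0) (t (γs i F y))) := by
          refine Finset.sum_le_sum fun i _ => ?_
          rw [← mul_add]
          exact mul_le_mul_right min_add_min_aux _
      _ = (∑ i, w i * min (t 0) (t (γs i E x))) + ∑ i, w i * min (t 0) (t (γs i F y)) :=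
          Finset.sum_add_distrib
      _ ≤ min (t 0) (∑ i, w i * t (γs i E x)) + min (t 0) (∑ i, w i * t (γs i F y)) :=
          add_le_add (sum_w_min_aux w hw _ _) (sum_w_min_aux w hw _ _)
end
end

section
/- Let L : [0,∞]² → [0,∞] satisfy L ≤ K₁ (i.e., L(x,y) ≤ x+y), let T₁ be a t-norm, and γ a τ_{L,T₁}-submeasure on Σ. Let t be an additive generator of a continuous Archimedean t-norm T with T ≤ T₁ pointwise. Then the map η_{γ,t} : Σ → [0,∞) defined by η_{γ,t}(E) = sup{ z ∈ [0,∞) : t(γ_E(z)) ≥ z } is a numerical submeasure: η_{γ,t}(∅) = 0, η_{γ,t} is monotone under inclusion, and η_{γ,t}(E∪F) ≤ η_{γ,t}(E) + η_{γ,t}(F) for all E,F ∈ Σ. -/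
open Set
open scoped ENNReal Classical

noncomputable section

def IsNumSubmeasureR {Ω : Type*} (R : Set (Set Ω)) (η : Set Ω → ℝ) : Prop :=
  η ∅ = 0 ∧ (∀ E F : Set Ω, E ∈ R → F ∈ R → E ⊆ F → η E ≤ η F) ∧
    (∀ E F : Set Ω, E ∈ R → F ∈ R → η (E ∪ F) ≤ η E + η F)

/-- for `L ≤ K₁`, a `τ_{L,T₁}`-submeasure `γ`, and an additive generator
`t` (with pseudo-inverse `tinv`) of a continuous Archimedean t-norm `T ≤ T₁`, the map
`η_{γ,t}(E) = sup {z ≥ 0 : t(γ_E(z)) ≥ z}` is a numerical submeasure. -/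
theorem stmt14 {Ω : Type*} (R : Set (Set Ω)) (hR : IsSetRing R)
    (L : ℝ → ℝ → ℝ) (hL : ∀ x y : ℝ, L x y ≤ x + y)
    (T₁ : ℝ → ℝ → ℝ) (hT₁ : IsTnorm T₁)
    (γ : Set Ω → ℝ → ℝ) (hγ : IsTauSub R L T₁ γ)
    (t : ℝ → ℝ≥0∞) (tinv : ℝ≥0∞ → ℝ)
    (htc : ContinuousOn t (Icc 0 1)) (hta : StrictAntiOn t (Icc 0 1)) (ht1 : t 1 = 0)
    (htinv_left : ∀ x ∈ Icc (0:ℝ) 1, tinv (t x) = x)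
    (htinv_right : ∀ y, t (tinv y) = min (t 0) y)
    (htinv_mem : ∀ y, tinv y ∈ Icc (0:ℝ) 1) (htinv_anti : Antitone tinv)
    (hTT₁ : ∀ u ∈ Icc (0:ℝ) 1, ∀ v ∈ Icc (0:ℝ) 1, tinv (t u + t v) ≤ T₁ u v)
    (hbdd : ∀ E, E ∈ R → BddAbove {z : ℝ | 0 ≤ z ∧ ENNReal.ofReal z ≤ t (γ E z)}) :
    IsNumSubmeasureR R
      (fun E => sSup {z : ℝ | 0 ≤ z ∧ ENNReal.ofReal z ≤ t (γ E z)}) := by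
  obtain ⟨hRe, hRu, -⟩ := hR
  obtain ⟨hdf, hempty, hmono, hsub⟩ := hγ
  have hanti : AntitoneOn t (Icc 0 1) := hta.antitoneOn
  have hcc : ∀ E, E ∈ R → ∀ x, γ E x ∈ Icc (0:ℝ) 1 := by
    intro E hE x
    obtain ⟨hm, h0, h1⟩ := hdf E hE
    refine ⟨?_, h1 x⟩
    rcases le_or_gt x 0 with hx | hx
    · exact (h0 x hx).ge
    · calc (0:ℝ) = γ E 0 := (h0 0 le_rfl).symm
        _ ≤ γ E x := hm hx.le
  have hzero : ∀ E, E ∈ R → (0:ℝ) ∈ {z : ℝ | 0 ≤ z ∧ ENNReal.ofReal z ≤ t (γ E z)} := by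
    intro E hE
    exact ⟨le_rfl, by simp⟩
  refine ⟨?_, ?_, ?_⟩
  · -- empty set
    apply le_antisymm
    · refine csSup_le ⟨0, hzero ∅ hRe⟩ ?_
      rintro z ⟨hz0, hz⟩
      by_contra hzpos
      push_neg at hzpos
      rw [hempty z] at hz
      simp only [eps0, if_pos hzpos, ht1, nonpos_iff_eq_zero] at hz
      rw [ENNReal.ofReal_eq_zero] at hz
      linarith
    · exact le_csSup (hbdd ∅ hRe) (hzero ∅ hRe)
  · -- monotone
    intro E F hE hF hEF
    refine csSup_le_csSup (hbdd F hF) ⟨0, hzero E hE⟩ ?_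
    rintro z ⟨hz0, hz⟩
    refine ⟨hz0, hz.trans (hanti (hcc F hF z) (hcc E hE z) (hmono E F hE hF hEF z))⟩
  · -- subadditive
    intro E F hE hF
    have hEF := hRu E F hE hF
    refine csSup_le ⟨0, hzero _ hEF⟩ ?_
    rintro z ⟨hz0, hz⟩
    by_contra hgt
    push_neg at hgt
    set a := sSup {z : ℝ | 0 ≤ z ∧ ENNReal.ofReal z ≤ t (γ E z)} with ha
    set b := sSup {z : ℝ | 0 ≤ z ∧ ENNReal.ofReal z ≤ t (γ F z)} with hb
    have ha0 : 0 ≤ a := le_csSup (hbdd E hE) (hzero E hE)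
    have hb0 : 0 ≤ b := le_csSup (hbdd F hF) (hzero F hF)
    set x := a + (z - a - b) / 2 with hxdef
    set y := b + (z - a - b) / 2 with hydef
    have hax : a < x := by rw [hxdef]; linarith
    have hby : b < y := by rw [hydef]; linarith
    have hx0 : 0 < x := lt_of_le_of_lt ha0 hax
    have hy0 : 0 < y := lt_of_le_of_lt hb0 hby
    have hxy : x + y = z := by rw [hxdef, hydef]; ring
    have hxE : t (γ E x) < ENNReal.ofReal x := by
      by_contra h
      push_neg at h
      exact absurd (le_csSup (hbdd E hE) ⟨hx0.le, h⟩) (not_le.2 hax)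
    have hyF : t (γ F y) < ENNReal.ofReal y := by
      by_contra h
      push_neg at h
      exact absurd (le_csSup (hbdd F hF) ⟨hy0.le, h⟩) (not_le.2 hby)
    have hT₁mem : T₁ (γ E x) (γ F y) ∈ Icc (0:ℝ) 1 :=
      hT₁.2.2.2.2 _ _ (hcc E hE x) (hcc F hF y)
    have h2 : γ (E ∪ F) (L x y) ≤ γ (E ∪ F) z := by
      refine (hdf _ hEF).1 ?_
      calc L x y ≤ x + y := hL x y
        _ = z := hxy
    have h3 : t (γ (E ∪ F) z) ≤ t (γ (E ∪ F) (L x y)) :=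
      hanti (hcc _ hEF _) (hcc _ hEF _) h2
    have h5 : t (γ (E ∪ F) (L x y)) ≤ t (T₁ (γ E x) (γ F y)) :=
      hanti hT₁mem (hcc _ hEF _) (hsub E F hE hF x y hx0 hy0)
    have h7 : t (T₁ (γ E x) (γ F y)) ≤ t (tinv (t (γ E x) + t (γ F y))) :=
      hanti (htinv_mem _) hT₁mem (hTT₁ _ (hcc E hE x) _ (hcc F hF y))
    have h8 : t (tinv (t (γ E x) + t (γ F y))) ≤ t (γ E x) + t (γ F y) := by
      rw [htinv_right]; exact min_le_right _ _
    have hlt : t (γ E x) + t (γ F y) < ENNReal.ofReal z := by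
      calc t (γ E x) + t (γ F y) < ENNReal.ofReal x + ENNReal.ofReal y :=
            ENNReal.add_lt_add hxE hyF
        _ = ENNReal.ofReal z := by rw [← ENNReal.ofReal_add hx0.le hy0.le, hxy]
    have : ENNReal.ofReal z < ENNReal.ofReal z :=
      lt_of_le_of_lt (hz.trans (h3.trans (h5.trans (h7.trans h8)))) hlt
    exact lt_irrefl _ this
end
end

section
/- Let T be a t-norm, L a commutative associative operation on [0,∞], and γ a τ_{L,T}-submeasure on a ring Σ. Define ρ : Σ × Σ → Δ⁺ by ρ(E,F) = γ_{E △ F} (symmetric difference). Then ρ satisfies the probabilistic triangle inequality ρ(E,F)(L(x,y)) ≥ T(ρ(E,G)(x), ρ(G,F)(y)) for all E,F,G ∈ Σ and x,y > 0, and ρ is translation invariant: ρ(E,F) = ρ(E △ G, F △ G) for all G ∈ Σ. -/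
open Set
open scoped ENNReal Classical

noncomputable section

/-- `ρ(E,F) = γ_{E ∆ F}` satisfies the probabilistic triangle inequality
and is translation invariant. -/
theorem stmt15 {Ω : Type*} (R : Set (Set Ω)) (hR : IsSetRing R)
    (T : ℝ → ℝ → ℝ) (hT : IsTnorm T)
    (L : ℝ → ℝ → ℝ) (hLcomm : ∀ x y, L x y = L y x)
    (hLassoc : ∀ x y z, L (L x y) z = L x (L y z))
    (γ : Set Ω → ℝ → ℝ) (hγ : IsTauSub R L T γ) :
    (∀ E F G : Set Ω, E ∈ R → F ∈ R → G ∈ R → ∀ x y : ℝ, 0 < x → 0 < y →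
      T (γ (symmDiff E G) x) (γ (symmDiff G F) y) ≤ γ (symmDiff E F) (L x y)) ∧
    (∀ E F G : Set Ω, γ (symmDiff E F) = γ (symmDiff (symmDiff E G) (symmDiff F G))) := by

  obtain ⟨hemp, hunion, hdiff⟩ := hR
  have hsd : ∀ E F : Set Ω, E ∈ R → F ∈ R → symmDiff E F ∈ R := by
    intro E F hE hF
    have : symmDiff E F = (E \ F) ∪ (F \ E) := by
      ext ω; simp [Set.mem_symmDiff]
    rw [this]; exact hunion _ _ (hdiff _ _ hE hF) (hdiff _ _ hF hE)
  constructor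
  · intro E F G hE hF hG x y hx hy
    have h1 : symmDiff E G ∈ R := hsd _ _ hE hG
    have h2 : symmDiff G F ∈ R := hsd _ _ hG hF
    have hsub : symmDiff E F ⊆ symmDiff E G ∪ symmDiff G F := by
      intro ω hω
      simp only [Set.mem_symmDiff, Set.mem_union, Set.mem_diff] at hω ⊢; tauto
    calc T (γ (symmDiff E G) x) (γ (symmDiff G F) y)
        ≤ γ (symmDiff E G ∪ symmDiff G F) (L x y) := hγ.2.2.2 _ _ h1 h2 x y hx hy
      _ ≤ γ (symmDiff E F) (L x y) :=
          hγ.2.2.1 _ _ (hsd _ _ hE hF) (hunion _ _ h1 h2) hsub _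
  · intro E F G
    have : symmDiff (symmDiff E G) (symmDiff F G) = symmDiff E F := by
      ext ω; simp only [Set.mem_symmDiff, Set.mem_union, Set.mem_diff]; tauto
    rw [this]
end
end

section
/- Let φ : [0,1] → [0,∞] be continuous, strictly decreasing, convex, with φ(1) = 0, and let C(u,v) = φ^{[−1]}(φ(u)+φ(v)) be the associated Archimedean copula, where φ^{[−1]}(x) = φ⁻¹(min(φ(0), x)). If η is a numerical submeasure on a ring Σ, then γ defined by γ_E(x) = φ^{[−1]}(η(E) − x) for x > 0 (interpreting η(E) − x as max(η(E) − x, 0) ∈ [0,∞], with φ^{[−1]}(s)=1 for s ≤ 0) is a τ_C-submeasure: γ_∅ = ε_0, γ is antitone under inclusion, and γ_{E∪F}(x+y) ≥ C(γ_E(x), γ_F(y)) for all x,y > 0. -/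
open Set
open scoped ENNReal Classical

noncomputable section

/-- for an additive generator `φ` (continuous, strictly decreasing,
convex, `φ 1 = 0`, with pseudo-inverse `φinv`) of an Archimedean copula
`C(u,v) = φinv (φ u + φ v)`, and a numerical submeasure `η`, the map
`γ_E(x) = φinv (η E - x)` is a `τ_C`-submeasure. -/
theorem stmt16 {Ω : Type*} (R : Set (Set Ω)) (hR : IsSetRing R)
    (φ : ℝ → ℝ≥0∞) (φinv : ℝ≥0∞ → ℝ)
    (hφc : ContinuousOn φ (Icc 0 1)) (hφa : StrictAntiOn φ (Icc 0 1)) (hφ1 : φ 1 = 0)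
    (hφconv : ∀ x ∈ Icc (0:ℝ) 1, ∀ y ∈ Icc (0:ℝ) 1, ∀ s u : ℝ,
      0 ≤ s → 0 ≤ u → s + u = 1 →
        φ (s * x + u * y) ≤ ENNReal.ofReal s * φ x + ENNReal.ofReal u * φ y)
    (hφinv_left : ∀ x ∈ Icc (0:ℝ) 1, φinv (φ x) = x)
    (hφinv_right : ∀ y, φ (φinv y) = min (φ 0) y)
    (hφinv_mem : ∀ y, φinv y ∈ Icc (0:ℝ) 1) (hφinv_anti : Antitone φinv)
    (η : Set Ω → ℝ≥0∞) (hη : IsNumSubmeasure R η) :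
    IsTauSub R (· + ·) (fun u v => φinv (φ u + φ v))
      (fun E x => if 0 < x then φinv (η E - ENNReal.ofReal x) else 0) := by
  obtain ⟨hη0, hηmono, hηsub⟩ := hη
  have hinvmin : ∀ t : ℝ≥0∞, φinv (min (φ 0) t) = φinv t := by
    intro t
    apply hφa.injOn (hφinv_mem _) (hφinv_mem _)
    rw [hφinv_right, hφinv_right, ← min_assoc, min_self]
  refine ⟨?_, ?_, ?_, ?_⟩
  · intro E _
    refine ⟨?_, ?_, ?_⟩
    · intro x y hxy
      by_cases hy : 0 < y
      · by_cases hx : 0 < x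
        · simp only [if_pos hx, if_pos hy]
          exact hφinv_anti (tsub_le_tsub_left (ENNReal.ofReal_le_ofReal hxy) _)
        · simp only [if_neg hx, if_pos hy]
          exact (hφinv_mem _).1
      · have hx : ¬ 0 < x := fun h => hy (h.trans_le hxy)
        simp [if_neg hx, if_neg hy]
    · intro x hx
      simp only [if_neg (not_lt.mpr hx)]
    · intro x
      dsimp only
      split_ifs
      exacts [(hφinv_mem _).2, zero_le_one]
  · intro x
    dsimp only
    unfold eps0
    split_ifs with h
    · simp only [hη0, zero_tsub]
      have h1 := hφinv_left 1 (by norm_num)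
      rw [hφ1] at h1
      exact h1
    · rfl
  · intro E F hE hF hEF x
    dsimp only
    split_ifs with h
    · exact hφinv_anti (tsub_le_tsub_right (hηmono E F hE hF hEF) _)
    · exact le_rfl
  · intro E F hE hF x y hx hy
    have hxy : (0:ℝ) < x + y := by linarith
    simp only [if_pos hx, if_pos hy, if_pos hxy]
    rw [hφinv_right, hφinv_right]
    set a := η E - ENNReal.ofReal x with ha
    set b := η F - ENNReal.ofReal y with hb
    set t := η (E ∪ F) - ENNReal.ofReal (x + y) with ht
    have htab : t ≤ a + b := by
      rw [ht, tsub_le_iff_right]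
      calc η (E ∪ F) ≤ η E + η F := hηsub E F hE hF
        _ ≤ (a + ENNReal.ofReal x) + (b + ENNReal.ofReal y) :=
            add_le_add le_tsub_add le_tsub_add
        _ = a + b + ENNReal.ofReal (x + y) := by
            rw [ENNReal.ofReal_add hx.le hy.le]; ring
    have key : min (φ 0) t ≤ min (φ 0) a + min (φ 0) b := by
      rcases le_total (φ 0) a with h | h
      · calc min (φ 0) t ≤ φ 0 := min_le_left _ _
          _ = min (φ 0) a := (min_eq_left h).symm
          _ ≤ _ := le_add_right le_rfl
      · rcases le_total (φ 0) b with h' | h'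
        · calc min (φ 0) t ≤ φ 0 := min_le_left _ _
            _ = min (φ 0) b := (min_eq_left h').symm
            _ ≤ _ := le_add_left le_rfl
        · calc min (φ 0) t ≤ t := min_le_right _ _
            _ ≤ a + b := htab
            _ = min (φ 0) a + min (φ 0) b := by rw [min_eq_right h, min_eq_right h']
    calc φinv (min (φ 0) a + min (φ 0) b) ≤ φinv (min (φ 0) t) := hφinv_anti key
      _ = φinv t := hinvmin t
end
end

section
/- Let η be a numerical submeasure on a ring Σ and λ ≥ 1. Define γ_E(x) = exp(−(max(η(E)−x, 0))^{1/λ}) for x > 0. Then γ is a τ_{C}-submeasure for the Gumbel–Hougaard copula C(u,v) = exp(−((−ln u)^λ + (−ln v)^λ)^{1/λ}) (with C(u,v)=0 if u=0 or v=0): γ_∅ = ε_0, γ antitone, and γ_{E∪F}(x+y) ≥ C(γ_E(x), γ_F(y)) for all x,y > 0. -/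
open Set
open scoped ENNReal Classical

noncomputable section

/-- The Gumbel–Hougaard copula with parameter `lam` (value `0` if `u = 0` or `v = 0`). -/
def gumbel (lam : ℝ) (u v : ℝ) : ℝ :=
  if u = 0 ∨ v = 0 then 0
  else Real.exp (-(((-Real.log u) ^ lam + (-Real.log v) ^ lam) ^ (1 / lam)))

/-- `γ_E(x) = exp (-(max (η E - x) 0) ^ (1/λ))` is a `τ_C`-submeasure for
the Gumbel–Hougaard copula, for every `λ ≥ 1`. -/
theorem stmt17 {Ω : Type*} (R : Set (Set Ω)) (hR : IsSetRing R)
    (η : Set Ω → ℝ≥0∞) (hη : IsNumSubmeasure R η) (lam : ℝ) (hlam : 1 ≤ lam) :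
    IsTauSub R (· + ·) (gumbel lam)
      (fun E x => if x ≤ 0 ∨ η E = ∞ then 0
        else Real.exp (-((max ((η E).toReal - x) 0) ^ (1 / lam)))) := by
  obtain ⟨h0, hmono, hsub⟩ := hη
  have hlam0 : (0:ℝ) < lam := lt_of_lt_of_le one_pos hlam
  have hl : lam ≠ 0 := ne_of_gt hlam0
  have hinv : (0:ℝ) ≤ 1/lam := by positivity
  have hnn : ∀ (E : Set Ω) (x : ℝ),
      (0:ℝ) ≤ (if x ≤ 0 ∨ η E = ∞ then 0
        else Real.exp (-((max ((η E).toReal - x) 0) ^ (1 / lam)))) := by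
    intro E x; split_ifs
    · exact le_rfl
    · exact (Real.exp_pos _).le
  refine ⟨?_, ?_, ?_, ?_⟩
  · intro E _
    refine ⟨?_, ?_, ?_⟩
    · intro x y hxy
      dsimp only
      by_cases hB : y ≤ 0 ∨ η E = ∞
      · have hA : x ≤ 0 ∨ η E = ∞ := hB.imp (fun h => le_trans hxy h) id
        rw [if_pos hA, if_pos hB]
      · by_cases hA : x ≤ 0 ∨ η E = ∞
        · rw [if_pos hA, if_neg hB]
          exact (Real.exp_pos _).le
        · rw [if_neg hA, if_neg hB]
          apply Real.exp_le_exp.mpr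
          apply neg_le_neg
          exact Real.rpow_le_rpow (le_max_right _ _)
            (max_le_max (by linarith) le_rfl) hinv
    · intro x hx
      simp [hx]
    · intro x
      have := hnn E x
      dsimp only at this ⊢
      split_ifs with h
      · exact zero_le_one
      · exact Real.exp_le_one_iff.mpr (neg_nonpos.mpr
          (Real.rpow_nonneg (le_max_right _ _) _))
  · intro x
    dsimp only
    rw [h0]
    unfold eps0
    by_cases hx : 0 < x
    · rw [if_neg (by push_neg; exact ⟨by linarith, by simp⟩), if_pos hx]
      rw [ENNReal.toReal_zero]
      rw [max_eq_right (by linarith)]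
      rw [Real.zero_rpow (by positivity)]
      simp
    · rw [if_pos (Or.inl (by linarith)), if_neg hx]
  · intro E F hE hF hEF x
    dsimp only
    by_cases hB : x ≤ 0 ∨ η F = ∞
    · rw [if_pos hB]
      exact hnn E x
    · push_neg at hB
      have hEtop : η E ≠ ∞ := ne_top_of_le_ne_top hB.2 (hmono E F hE hF hEF)
      rw [if_neg (by push_neg; exact hB),
          if_neg (by push_neg; exact ⟨hB.1, hEtop⟩)]
      apply Real.exp_le_exp.mpr
      apply neg_le_neg
      apply Real.rpow_le_rpow (le_max_right _ _) _ hinv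
      apply max_le_max _ le_rfl
      have : (η E).toReal ≤ (η F).toReal :=
        ENNReal.toReal_mono hB.2 (hmono E F hE hF hEF)
      linarith
  · intro E F hE hF x y hx hy
    dsimp only
    by_cases hEtop : η E = ∞
    · rw [if_pos (Or.inr hEtop)]
      have hz : ∀ v : ℝ, gumbel lam 0 v = 0 := fun v => by rw [gumbel, if_pos (Or.inl rfl)]
      rw [hz]
      exact hnn (E ∪ F) (x + y)
    · by_cases hFtop : η F = ∞
      · rw [if_pos (Or.inr hFtop)]
        have hz : ∀ u : ℝ, gumbel lam u 0 = 0 := fun u => by rw [gumbel, if_pos (Or.inr rfl)]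
        rw [hz]
        exact hnn (E ∪ F) (x + y)
      · rw [if_neg (by push_neg; exact ⟨by linarith, hEtop⟩),
            if_neg (by push_neg; exact ⟨by linarith, hFtop⟩)]
        set a : ℝ := max ((η E).toReal - x) 0 with ha
        set b : ℝ := max ((η F).toReal - y) 0 with hb
        have ha0 : 0 ≤ a := le_max_right _ _
        have hb0 : 0 ≤ b := le_max_right _ _
        rw [gumbel, if_neg (by push_neg; exact ⟨(Real.exp_pos _).ne', (Real.exp_pos _).ne'⟩)]
        rw [Real.log_exp, Real.log_exp, neg_neg, neg_neg]
        rw [← Real.rpow_mul ha0, ← Real.rpow_mul hb0, one_div_mul_cancel hl,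
            Real.rpow_one, Real.rpow_one]
        have hUtop : η (E ∪ F) ≠ ∞ := by
          refine ne_top_of_le_ne_top ?_ (hsub E F hE hF)
          exact ENNReal.add_ne_top.mpr ⟨hEtop, hFtop⟩
        rw [if_neg (by push_neg; exact ⟨by linarith, hUtop⟩)]
        apply Real.exp_le_exp.mpr
        apply neg_le_neg
        apply Real.rpow_le_rpow (le_max_right _ _) _ hinv
        have hsum : (η (E ∪ F)).toReal ≤ (η E).toReal + (η F).toReal := by
          have h1 := hsub E F hE hF
          calc (η (E ∪ F)).toReal ≤ (η E + η F).toReal :=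
                ENNReal.toReal_mono (ENNReal.add_ne_top.mpr ⟨hEtop, hFtop⟩) h1
            _ = (η E).toReal + (η F).toReal := ENNReal.toReal_add hEtop hFtop
        have haE : (η E).toReal - x ≤ a := le_max_left _ _
        have haF : (η F).toReal - y ≤ b := le_max_left _ _
        apply max_le _ (by linarith)
        linarith
end
end

section
/- For semi-copulas S₁, S₂ on [0,1], define Θ_S as the set of τ_S-submeasures on a fixed ring Σ. Then Θ_{S₁} ∩ Θ_{S₂} = Θ_{S₁ ∨ S₂} and Θ_{S₁} ∪' Θ_{S₂} ⊆ Θ_{S₁ ∧ S₂}, where ∨, ∧ are pointwise max and min. More precisely: (a) γ ∈ Θ_{S₁} and γ ∈ Θ_{S₂} if and only if γ ∈ Θ_{S₁∨S₂}; (b) if γ ∈ Θ_{S₁} or γ ∈ Θ_{S₂} then γ ∈ Θ_{S₁∧S₂}. Moreover the pointwise max and min of two semi-copulas are semi-copulas. -/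
open Set
open scoped ENNReal Classical

noncomputable section

def IsSemicopula (S : ℝ → ℝ → ℝ) : Prop :=
  (∀ u u' v, u ∈ Icc (0:ℝ) 1 → u' ∈ Icc (0:ℝ) 1 → v ∈ Icc (0:ℝ) 1 → u ≤ u' →
    S u v ≤ S u' v) ∧
  (∀ u v v', u ∈ Icc (0:ℝ) 1 → v ∈ Icc (0:ℝ) 1 → v' ∈ Icc (0:ℝ) 1 → v ≤ v' →
    S u v ≤ S u v') ∧
  (∀ u ∈ Icc (0:ℝ) 1, S u 1 = u ∧ S 1 u = u) ∧
  (∀ u v, u ∈ Icc (0:ℝ) 1 → v ∈ Icc (0:ℝ) 1 → S u v ∈ Icc (0:ℝ) 1)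

/-- (a) `γ ∈ Θ_{S₁} ∩ Θ_{S₂} ↔ γ ∈ Θ_{S₁ ∨ S₂}`;
(b) `γ ∈ Θ_{S₁} ∪ Θ_{S₂} → γ ∈ Θ_{S₁ ∧ S₂}`; moreover pointwise max and min of two
semi-copulas are semi-copulas. -/
theorem stmt18 {Ω : Type*} (R : Set (Set Ω)) (hR : IsSetRing R)
    (S₁ S₂ : ℝ → ℝ → ℝ) (h1 : IsSemicopula S₁) (h2 : IsSemicopula S₂) :
    (∀ γ : Set Ω → ℝ → ℝ,
      (IsTauSub R (· + ·) S₁ γ ∧ IsTauSub R (· + ·) S₂ γ) ↔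
        IsTauSub R (· + ·) (fun u v => max (S₁ u v) (S₂ u v)) γ) ∧
    (∀ γ : Set Ω → ℝ → ℝ,
      (IsTauSub R (· + ·) S₁ γ ∨ IsTauSub R (· + ·) S₂ γ) →
        IsTauSub R (· + ·) (fun u v => min (S₁ u v) (S₂ u v)) γ) ∧
    IsSemicopula (fun u v => max (S₁ u v) (S₂ u v)) ∧
    IsSemicopula (fun u v => min (S₁ u v) (S₂ u v)) := by

  obtain ⟨m1, m1', b1, r1⟩ := h1
  obtain ⟨m2, m2', b2, r2⟩ := h2
  refine ⟨?_, ?_, ?_, ?_⟩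
  · intro γ
    constructor
    · rintro ⟨⟨d1, e1, a1, s1⟩, ⟨_, _, _, s2⟩⟩
      exact ⟨d1, e1, a1, fun E F hE hF x y hx hy =>
        max_le (s1 E F hE hF x y hx hy) (s2 E F hE hF x y hx hy)⟩
    · rintro ⟨d, e, a, s⟩
      exact ⟨⟨d, e, a, fun E F hE hF x y hx hy =>
          le_trans (le_max_left _ _) (s E F hE hF x y hx hy)⟩,
        ⟨d, e, a, fun E F hE hF x y hx hy =>
          le_trans (le_max_right _ _) (s E F hE hF x y hx hy)⟩⟩
  · intro γ h
    rcases h with ⟨d, e, a, s⟩ | ⟨d, e, a, s⟩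
    · exact ⟨d, e, a, fun E F hE hF x y hx hy =>
        le_trans (min_le_left _ _) (s E F hE hF x y hx hy)⟩
    · exact ⟨d, e, a, fun E F hE hF x y hx hy =>
        le_trans (min_le_right _ _) (s E F hE hF x y hx hy)⟩
  · refine ⟨?_, ?_, ?_, ?_⟩
    · intro u u' v hu hu' hv huu'
      exact max_le_max (m1 u u' v hu hu' hv huu') (m2 u u' v hu hu' hv huu')
    · intro u v v' hu hv hv' hvv'
      exact max_le_max (m1' u v v' hu hv hv' hvv') (m2' u v v' hu hv hv' hvv')
    · intro u hu
      constructor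
      · show S₁ u 1 ⊔ S₂ u 1 = u; rw [(b1 u hu).1, (b2 u hu).1, max_self]
      · show S₁ 1 u ⊔ S₂ 1 u = u; rw [(b1 u hu).2, (b2 u hu).2, max_self]
    · intro u v hu hv
      obtain ⟨l1, u1⟩ := r1 u v hu hv
      obtain ⟨l2, u2⟩ := r2 u v hu hv
      exact ⟨le_max_of_le_left l1, max_le u1 u2⟩
  · refine ⟨?_, ?_, ?_, ?_⟩
    · intro u u' v hu hu' hv huu'
      exact min_le_min (m1 u u' v hu hu' hv huu') (m2 u u' v hu hu' hv huu')
    · intro u v v' hu hv hv' hvv'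
      exact min_le_min (m1' u v v' hu hv hv' hvv') (m2' u v v' hu hv hv' hvv')
    · intro u hu
      constructor
      · show S₁ u 1 ⊓ S₂ u 1 = u; rw [(b1 u hu).1, (b2 u hu).1, min_self]
      · show S₁ 1 u ⊓ S₂ 1 u = u; rw [(b1 u hu).2, (b2 u hu).2, min_self]
    · intro u v hu hv
      obtain ⟨l1, u1⟩ := r1 u v hu hv
      obtain ⟨l2, u2⟩ := r2 u v hu hv
      exact ⟨le_min l1 l2, min_le_of_left_le u1⟩
end
end
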